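/- Elimination of duplicate hypotheses preserves derivability: if R = (H ⇒ C) is a Horn clause and R' = (H' ⇒ C) where H' is the multiset H with one duplicated occurrence of a fact removed (i.e., H = H' ⊎ {F} with F ∈ H'), then for any set of clauses S and closed fact G, G is derivable from S ∪ {R} iff G is derivable from S ∪ {R'}. -/

import Mathlib

/-- First-order terms over function symbols `F`, with natural-number variables. -/
inductive Trm (F : Type) : Type
  | var : Nat → Trm F
  | app : F → List (Trm F) → Trm F

namespace Trm

variable {F : Type}

/-- Homomorphic extension of a substitution to terms. -/
def subst (σ : Nat → Trm F) : Trm F → Trm F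
  | var x => σ x
  | app f ts => app f (ts.attach.map (fun t => subst σ t.1))
decreasing_by
  simp_wf
  have := List.sizeOf_lt_of_mem t.2
  omega

/-- `VarOcc x t` : variable `x` occurs in term `t`. -/
inductive VarOcc (x : Nat) : Trm F → Prop
  | var : VarOcc x (var x)
  | app {f : F} {ts : List (Trm F)} {t : Trm F} : t ∈ ts → VarOcc x t → VarOcc x (app f ts)

end Trm

/-- A term is closed when no variable occurs in it. -/
def ClosedT {F : Type} (t : Trm F) : Prop := ∀ x, ¬ Trm.VarOcc x t

/-- A fact is an atom `P(t1,...,tn)`. -/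
structure Fct (P F : Type) where
  pred : P
  args : List (Trm F)

def Fct.subst {P F : Type} (σ : Nat → Trm F) (a : Fct P F) : Fct P F :=
  ⟨a.pred, a.args.map (Trm.subst σ)⟩

def Fct.Closed {P F : Type} (a : Fct P F) : Prop := ∀ t ∈ a.args, ClosedT t

def Fct.VarOcc {P F : Type} (x : Nat) (a : Fct P F) : Prop := ∃ t ∈ a.args, Trm.VarOcc x t

/-- A Horn clause: a finite multiset of hypotheses and a conclusion. -/
structure Clause (P F : Type) where
  hyp : Multiset (Fct P F)
  concl : Fct P F

/-- `(H1 ⇒ C1)` subsumes `(H2 ⇒ C2)` iff some substitution σ has `σ C1 = C2` and `σ H1 ⊆ H2`. -/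
def Subsumes {P F : Type} (c1 c2 : Clause P F) : Prop :=
  ∃ σ : Nat → Trm F, Fct.subst σ c1.concl = c2.concl ∧ c1.hyp.map (Fct.subst σ) ≤ c2.hyp

/-- Derivability of a closed fact via a finite derivation tree: each node is labeled by a
clause of `R` that subsumes the local inference `{labels of outgoing edges} ⇒ label of
incoming edge`. -/
inductive DTree {P F : Type} (R : Set (Clause P F)) : Fct P F → Prop
  | node (cl : Clause P F) (hs : Multiset (Fct P F)) (C : Fct P F) :
      cl ∈ R → Subsumes cl ⟨hs, C⟩ → (∀ f ∈ hs, DTree R f) → DTree R C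

/-- Elimination of duplicate hypotheses preserves derivability: if `H = H' ⊎ {Fd}` with
`Fd ∈ H'`, then `(H ⇒ C)` and `(H' ⇒ C)` derive the same closed facts relative to any
clause set `S`. -/
theorem elim_duplicate_hyp {P F : Type}
    (H' : Multiset (Fct P F)) (Fd C : Fct P F) (hFd : Fd ∈ H')
    (S : Set (Clause P F)) (G : Fct P F) (hG : G.Closed) :
    DTree (insert ⟨Fd ::ₘ H', C⟩ S) G ↔ DTree (insert ⟨H', C⟩ S) G := by
  clear hG
  constructor
  · intro h
    induction h with
    | node cl hs C' hmem hsub _ ih =>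
      rcases hmem with heq | hS
      · subst heq
        obtain ⟨σ, hc, hh⟩ := hsub
        refine DTree.node ⟨H', C⟩ hs C' (Or.inl rfl) ⟨σ, hc, ?_⟩ ih
        calc H'.map (Fct.subst σ) ≤ (Fd ::ₘ H').map (Fct.subst σ) :=
              Multiset.map_le_map (Multiset.le_cons_self _ _)
          _ ≤ hs := hh
      · exact DTree.node cl hs C' (Or.inr hS) hsub ih
  · intro h
    induction h with
    | node cl hs C' hmem hsub hall ih =>
      rcases hmem with heq | hS
      · subst heq
        obtain ⟨σ, hc, hh⟩ := hsub
        have hmemFd : Fct.subst σ Fd ∈ hs :=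
          Multiset.mem_of_le hh (Multiset.mem_map_of_mem _ hFd)
        refine DTree.node ⟨Fd ::ₘ H', C⟩ (Fct.subst σ Fd ::ₘ hs) C' (Or.inl rfl)
          ⟨σ, hc, ?_⟩ ?_
        · simpa using Multiset.cons_le_cons (Fct.subst σ Fd) hh
        · intro f hf
          rcases Multiset.mem_cons.mp hf with rfl | hf
          · exact ih _ hmemFd
          · exact ih _ hf
      · exact DTree.node cl hs C' (Or.inr hS) hsub ih
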